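/- Let k ≥ 2 be an integer and Γ ⊆ ℤ^k a finite nonempty set such that for every i ∈ {1,…,k} the i-th coordinate projection π_i(Γ) has more than one element (i.e., no coordinate is constant on Γ). Then H(Γ) ≥ log(k/(k−1)^{(k−1)/k}). -/

import Mathlib

open scoped BigOperators
open Classical

noncomputable section

namespace SlicePaper

/-- Shannon entropy of the `i`-th coordinate marginal of a distribution `p` on `Δ`. -/
def margEnt {ι : Type*} [Fintype ι] (Δ : Finset (ι → ℤ)) (p : (ι → ℤ) → ℝ) (i : ι) : ℝ :=
  -∑ α ∈ Δ.image (fun γ => γ i),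
      (∑ γ ∈ Δ.filter (fun γ => γ i = α), p γ) *
        Real.log (∑ γ ∈ Δ.filter (fun γ => γ i = α), p γ)

/-- The entropy `H(Δ)` of a finite set of integer tuples. -/
def HSet {ι : Type*} [Fintype ι] (Δ : Finset (ι → ℤ)) : ℝ :=
  sSup {e : ℝ | ∃ p : (ι → ℤ) → ℝ, (∀ γ, 0 ≤ p γ) ∧ (∀ γ, p γ ≠ 0 → γ ∈ Δ) ∧
    (∑ γ ∈ Δ, p γ) = 1 ∧ e = ⨅ i, margEnt Δ p i}

/-- Maximal elements of `Δ` w.r.t. the product of the linear orders `σ i`. -/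
def maxElems {ι : Type*} [Fintype ι] (σ : ι → LinearOrder ℤ) (Δ : Finset (ι → ℤ)) :
    Finset (ι → ℤ) :=
  Δ.filter (fun γ => ∀ δ ∈ Δ, (∀ i, (σ i).le (γ i) (δ i)) → γ = δ)

/-- `ξ k = log (k / (k-1)^((k-1)/k))`. -/
def xi (k : ℕ) : ℝ :=
  Real.log ((k : ℝ) / ((k : ℝ) - 1) ^ (((k : ℝ) - 1) / (k : ℝ)))

/-- Slice rank of a coefficient array `c`. -/
def sliceRank {k : ℕ} (F : Type*) [Field F] (τ : Fin k → Type*) [∀ i, Fintype (τ i)]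
    (c : (∀ i, τ i) → F) : ℕ :=
  sInf {r : ℕ | ∃ j : Fin r → Fin k, ∃ a : ∀ l : Fin r, τ (j l) → F,
    ∃ b : ∀ l : Fin r, (((i : {i : Fin k // i ≠ j l}) → τ i.1) → F),
    ∀ s : ∀ i, τ i, c s = ∑ l : Fin r, a l (s (j l)) * b l (fun i => s i.1)}

/-- `n`-th tensor power of a coefficient array. -/
def tpow {k : ℕ} {F : Type*} [Field F] {τ : Fin k → Type*} (c : (∀ i, τ i) → F) (n : ℕ) :
    (∀ i, Fin n → τ i) → F :=
  fun u => ∏ m : Fin n, c (fun i => u i m)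

/-- Support of a coefficient array, as a finite set of integer tuples. -/
def support {k : ℕ} {F : Type*} [Field F] (S : Fin k → Finset ℤ)
    (c : (∀ i, {x : ℤ // x ∈ S i}) → F) : Finset (Fin k → ℤ) :=
  (Finset.univ.filter (fun s : ∀ i, {x : ℤ // x ∈ S i} => c s ≠ 0)).image
    (fun s i => (s i : ℤ))

/-- Section `Γ_I^x`: restrictions to coordinates outside `I` of the γ ∈ Γ agreeing with x on I. -/
def sect {k : ℕ} (Γ : Finset (Fin k → ℤ)) (I : Finset (Fin k)) (x : Fin k → ℤ) :
    Finset ({i : Fin k // i ∉ I} → ℤ) :=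
  (Γ.filter (fun γ => ∀ i ∈ I, γ i = x i)).image (fun γ i => γ i.1)

/-- Section along a single coordinate. -/
def sect1 {k : ℕ} (Γ : Finset (Fin k → ℤ)) (i : Fin k) (a : ℤ) :
    Finset ({j : Fin k // j ≠ i} → ℤ) :=
  (Γ.filter (fun γ => γ i = a)).image (fun γ j => γ j.1)

/-- Trifferent set of strings. -/
def trifferent {n : ℕ} {α : Type*} (A : Finset (Fin n → α)) : Prop :=
  ∀ x ∈ A, ∀ y ∈ A, ∀ z ∈ A, x ≠ y → y ≠ z → x ≠ z →
    ∃ i, x i ≠ y i ∧ y i ≠ z i ∧ x i ≠ z i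

/-- The cube root of unity `ω = e^{2πi/3}`. -/
def w : ℂ := Complex.exp (2 * Real.pi * Complex.I / 3)

/-- The tensor `f_{x,y}(z,t)` used for the trifference problem. -/
def f {n : ℕ} (x y z t : Fin n → ℂ) : ℂ :=
  ∏ i, (x i + y i + z i) * (x i + y i + t i)

/-- Monomial functions `g_{α,β}`. -/
def g {n : ℕ} (α β : Fin n → ℕ) : (Fin n → ℂ) × (Fin n → ℂ) → ℂ :=
  fun q => ∏ i, (q.1 i + q.2 i) ^ α i * (q.1 i * q.2 i) ^ β i



private lemma negMulLog_add_le' {x y : ℝ} (hx : 0 ≤ x) (hy : 0 ≤ y) :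
    Real.negMulLog (x + y) ≤ Real.negMulLog x + Real.negMulLog y := by
  rcases hx.eq_or_lt with h | h
  · simp [← h]
  rcases hy.eq_or_lt with h' | h'
  · simp [← h']
  have l1 : x * Real.log x ≤ x * Real.log (x + y) :=
    mul_le_mul_of_nonneg_left (Real.log_le_log h (by linarith)) hx
  have l2 : y * Real.log y ≤ y * Real.log (x + y) :=
    mul_le_mul_of_nonneg_left (Real.log_le_log h' (by linarith)) hy
  simp only [Real.negMulLog, neg_mul]
  nlinarith [l1, l2]

private lemma negMulLog_sum_le {α : Type*} (T : Finset α) (f : α → ℝ)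
    (hf : ∀ a ∈ T, 0 ≤ f a) :
    Real.negMulLog (∑ a ∈ T, f a) ≤ ∑ a ∈ T, Real.negMulLog (f a) := by
  induction T using Finset.cons_induction with
  | empty => simp
  | cons a s ha ih =>
    rw [Finset.sum_cons, Finset.sum_cons]
    have h1 : 0 ≤ f a := hf a (Finset.mem_cons_self a s)
    have h2 : ∀ b ∈ s, 0 ≤ f b := fun b hb => hf b (Finset.mem_cons_of_mem hb)
    calc Real.negMulLog (f a + ∑ x ∈ s, f x)
        ≤ Real.negMulLog (f a) + Real.negMulLog (∑ x ∈ s, f x) :=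
          negMulLog_add_le' h1 (Finset.sum_nonneg h2)
      _ ≤ Real.negMulLog (f a) + ∑ x ∈ s, Real.negMulLog (f x) :=
          add_le_add le_rfl (ih h2)

private lemma negMulLog_le_one' {x : ℝ} (hx : 0 ≤ x) : Real.negMulLog x ≤ 1 := by
  rcases hx.eq_or_lt with h | h
  · simp [← h]
  have hl := Real.log_le_sub_one_of_pos (inv_pos.mpr h)
  have hlog : Real.negMulLog x = x * Real.log x⁻¹ := by
    unfold Real.negMulLog; rw [Real.log_inv]; ring
  rw [hlog]
  calc x * Real.log x⁻¹ ≤ x * (x⁻¹ - 1) := mul_le_mul_of_nonneg_left hl hx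
    _ = 1 - x := by field_simp
    _ ≤ 1 := by linarith

private lemma binEntropy_anchor {k : ℕ} (hk : 2 ≤ k) {q : ℝ}
    (h1 : ((k : ℝ))⁻¹ ≤ q) (h2 : q ≤ 1 - ((k : ℝ))⁻¹) :
    Real.binEntropy ((k : ℝ))⁻¹ ≤ Real.binEntropy q := by
  have hk2 : (2 : ℝ) ≤ (k : ℝ) := by exact_mod_cast hk
  have hkpos : (0 : ℝ) < (k : ℝ) := by linarith
  have hinv : ((k : ℝ))⁻¹ ≤ 2⁻¹ := by
    apply inv_anti₀ (by norm_num) hk2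
  have hq1 : (0:ℝ) ≤ ((k : ℝ))⁻¹ := by positivity
  rcases le_total q 2⁻¹ with hq | hq
  · exact Real.binEntropy_strictMonoOn.monotoneOn ⟨hq1, hinv⟩ ⟨le_trans hq1 h1, hq⟩ h1
  · have h1' : ((k : ℝ))⁻¹ ≤ 1 - q := by linarith
    have h2' : 1 - q ≤ 2⁻¹ := by linarith
    calc Real.binEntropy ((k : ℝ))⁻¹ ≤ Real.binEntropy (1 - q) :=
          Real.binEntropy_strictMonoOn.monotoneOn ⟨hq1, hinv⟩ ⟨by linarith, h2'⟩ h1'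
      _ = Real.binEntropy q := Real.binEntropy_one_sub q

private lemma xi_eq_binEntropy {k : ℕ} (hk : 2 ≤ k) : xi k = Real.binEntropy ((k : ℝ))⁻¹ := by
  have hk2 : (2 : ℝ) ≤ (k : ℝ) := by exact_mod_cast hk
  have hkpos : (0 : ℝ) < (k : ℝ) := by linarith
  have hkm : (0 : ℝ) < (k : ℝ) - 1 := by linarith
  have hrp : (0:ℝ) < ((k : ℝ) - 1) ^ (((k : ℝ) - 1) / (k : ℝ)) := Real.rpow_pos_of_pos hkm _
  rw [xi, Real.log_div (by positivity) (by positivity), Real.log_rpow hkm]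
  rw [Real.binEntropy]
  have h1 : (1 : ℝ) - ((k:ℝ))⁻¹ = ((k:ℝ) - 1) / (k:ℝ) := by field_simp
  have h2 : Real.log (((k:ℝ))⁻¹)⁻¹ = Real.log (k:ℝ) := by rw [inv_inv]
  have h3 : Real.log (((k:ℝ) - 1) / (k:ℝ))⁻¹ = Real.log (k:ℝ) - Real.log ((k:ℝ)-1) := by
    rw [Real.log_inv, Real.log_div hkm.ne' hkpos.ne']; ring
  rw [h1, h2, h3]
  field_simp
  ring

private lemma margEnt_eq {ι : Type*} [Fintype ι] (Δ : Finset (ι → ℤ)) (p : (ι → ℤ) → ℝ)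
    (i : ι) :
    margEnt Δ p i = ∑ α ∈ Δ.image (fun γ => γ i),
      Real.negMulLog (∑ γ ∈ Δ.filter (fun γ => γ i = α), p γ) := by
  rw [margEnt, ← Finset.sum_neg_distrib]
  exact Finset.sum_congr rfl fun α _ => by simp only [Real.negMulLog_def]; ring

private lemma margEnt_le_card {ι : Type*} [Fintype ι] (Δ : Finset (ι → ℤ)) (p : (ι → ℤ) → ℝ)
    (hp0 : ∀ γ, 0 ≤ p γ) (i : ι) :
    margEnt Δ p i ≤ (Δ.card : ℝ) := by
  rw [margEnt_eq]
  calc ∑ α ∈ Δ.image (fun γ => γ i),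
        Real.negMulLog (∑ γ ∈ Δ.filter (fun γ => γ i = α), p γ)
      ≤ ∑ _α ∈ Δ.image (fun γ => γ i), (1:ℝ) :=
        Finset.sum_le_sum fun α _ => negMulLog_le_one' (Finset.sum_nonneg fun γ _ => hp0 γ)
    _ = ((Δ.image (fun γ => γ i)).card : ℝ) := by simp
    _ ≤ (Δ.card : ℝ) := by exact_mod_cast Finset.card_image_le


/-- if no coordinate is constant on a finite nonempty `Γ ⊆ ℤ^k`, then
`H(Γ) ≥ log(k/(k-1)^((k-1)/k))`. -/
theorem stmt9 {k : ℕ} (hk : 2 ≤ k) (Γ : Finset (Fin k → ℤ)) (hne : Γ.Nonempty)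
    (h : ∀ i : Fin k, 1 < (Γ.image (fun γ => γ i)).card) :
    xi k ≤ HSet Γ := by
  classical
  haveI : Nonempty (Fin k) := ⟨⟨0, by omega⟩⟩
  -- extract a minimal subset S of Γ with all projections non-constant
  have hmem0 : Γ ∈ Γ.powerset.filter
      (fun S => ∀ i : Fin k, 1 < (S.image (fun γ => γ i)).card) := by
    simp only [Finset.mem_filter, Finset.mem_powerset]
    exact ⟨le_refl _, h⟩
  have hne0 : (Γ.powerset.filter
      (fun S => ∀ i : Fin k, 1 < (S.image (fun γ => γ i)).card)).Nonempty := ⟨Γ, hmem0⟩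
  obtain ⟨S, hSmem, hSmin'⟩ := Finset.exists_minimal hne0
  have hSmin : ∀ x ∈ Γ.powerset.filter
      (fun S => ∀ i : Fin k, 1 < (S.image (fun γ => γ i)).card), ¬ x < S :=
    fun x hx hlt => lt_irrefl _ (lt_of_lt_of_le hlt (hSmin' hx hlt.le))
  simp only [Finset.mem_filter, Finset.mem_powerset] at hSmem
  obtain ⟨hSsub, hPS⟩ := hSmem
  have hk0 : 0 < k := by omega
  have hS2 : 2 ≤ S.card := by
    have h1 := hPS ⟨0, hk0⟩
    have hle : (S.image (fun γ => γ (⟨0, hk0⟩ : Fin k))).card ≤ S.card :=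
      Finset.card_image_le
    exact le_trans h1 hle
  have hSne : S.Nonempty := Finset.card_pos.mp (by omega)
  -- S has at most k elements
  have hmk : S.card ≤ k := by
    by_contra hgt
    push_neg at hgt
    have key : ∀ γ, γ ∈ S → ∃ i : Fin k, ((S.erase γ).image (fun δ => δ i)).card ≤ 1 := by
      intro γ hγ
      by_contra hc
      push_neg at hc
      exact hSmin (S.erase γ)
        (by
          simp only [Finset.mem_filter, Finset.mem_powerset]
          exact ⟨(Finset.erase_subset _ _).trans hSsub, hc⟩)
        (Finset.erase_ssubset hγ)
    choose f hf using key
    set g : (Fin k → ℤ) → Fin k :=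
      fun γ => if hγ : γ ∈ S then f γ hγ else ⟨0, hk0⟩ with hg
    have hcard : (Finset.univ : Finset (Fin k)).card < S.card := by
      simpa using hgt
    obtain ⟨γ, hγS, δ, hδS, hγδ, hgeq⟩ :=
      Finset.exists_ne_map_eq_of_card_lt_of_maps_to hcard
        (fun γ _ => Finset.mem_univ (g γ))
    have eγ : g γ = f γ hγS := dif_pos hγS
    have eδ : g δ = f δ hδS := dif_pos hδS
    have hgeq' : f γ hγS = f δ hδS := eγ.symm.trans (hgeq.trans eδ)
    obtain ⟨i, hi⟩ : ∃ i : Fin k, i = f γ hγS := ⟨f γ hγS, rfl⟩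
    have hiγ : ((S.erase γ).image (fun δ' => δ' i)).card ≤ 1 := by
      rw [hi]; exact hf γ hγS
    have hiδ : ((S.erase δ).image (fun δ' => δ' i)).card ≤ 1 := by
      rw [hi, hgeq']; exact hf δ hδS
    have huniq : ∀ (η a b : Fin k → ℤ),
        ((S.erase η).image (fun δ' => δ' i)).card ≤ 1 →
        a ∈ S.erase η → b ∈ S.erase η → a i = b i := by
      intro η a b hc ha hb
      exact Finset.card_le_one.mp hc _ (Finset.mem_image_of_mem _ ha) _
        (Finset.mem_image_of_mem _ hb)
    have hδγ : δ ∈ S.erase γ := Finset.mem_erase.mpr ⟨fun hh => hγδ hh.symm, hδS⟩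
    have hθex : ((S.erase γ).erase δ).Nonempty := by
      rw [← Finset.card_pos, Finset.card_erase_of_mem hδγ, Finset.card_erase_of_mem hγS]
      clear hiγ hiδ
      omega
    obtain ⟨θ, hθ⟩ := hθex
    have hθγ : θ ∈ S.erase γ := Finset.mem_of_mem_erase hθ
    have hθS : θ ∈ S := Finset.mem_of_mem_erase hθγ
    have hθδ : θ ∈ S.erase δ :=
      Finset.mem_erase.mpr ⟨(Finset.mem_erase.mp hθ).1, hθS⟩
    have hγθ : γ i = θ i :=
      huniq δ γ θ hiδ (Finset.mem_erase.mpr ⟨hγδ, hγS⟩) hθδ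
    -- all elements of S agree at coordinate i
    have hall : ∀ η ∈ S, η i = θ i := by
      intro η hη
      by_cases hηγ : η = γ
      · rw [hηγ]; exact hγθ
      · exact huniq γ η θ hiγ (Finset.mem_erase.mpr ⟨hηγ, hη⟩) hθγ
    have hcon : (S.image (fun γ' => γ' i)).card ≤ 1 := by
      refine Finset.card_le_one.mpr ?_
      intro a ha b hb
      obtain ⟨η₁, hη₁, rfl⟩ := Finset.mem_image.mp ha
      obtain ⟨η₂, hη₂, rfl⟩ := Finset.mem_image.mp hb
      rw [hall η₁ hη₁, hall η₂ hη₂]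
    exact Nat.lt_irrefl 1 (lt_of_lt_of_le (hPS i) hcon)
  -- the uniform distribution on S
  set m := S.card with hm
  have hmne : ((m : ℝ)) ≠ 0 := by
    have : 0 < m := by omega
    positivity
  have hmpos : (0:ℝ) < (m:ℝ) := by
    have : 0 < m := by omega
    positivity
  set p : (Fin k → ℤ) → ℝ := fun γ => if γ ∈ S then ((m:ℝ))⁻¹ else 0 with hp
  have hp0 : ∀ γ, 0 ≤ p γ := by
    intro γ; simp only [hp]; split
    · positivity
    · exact le_refl 0
  have hpsupp : ∀ γ, p γ ≠ 0 → γ ∈ Γ := by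
    intro γ hγ
    by_cases hγS : γ ∈ S
    · exact hSsub hγS
    · exfalso; apply hγ; simp [hp, hγS]
  have hpsum : ∑ γ ∈ Γ, p γ = 1 := by
    simp only [hp]
    rw [Finset.sum_ite_mem, Finset.inter_eq_right.mpr hSsub, Finset.sum_const,
      nsmul_eq_mul, ← hm, mul_inv_cancel₀ hmne]
  -- the per-coordinate entropy bound
  have hmain : ∀ i : Fin k, xi k ≤ margEnt Γ p i := by
    intro i
    set q : ℤ → ℝ := fun α => ∑ γ ∈ Γ.filter (fun γ => γ i = α), p γ with hq
    have hq0 : ∀ α, 0 ≤ q α := fun α => Finset.sum_nonneg fun γ _ => hp0 γ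
    have hqsum : ∑ α ∈ Γ.image (fun γ => γ i), q α = 1 := by
      simp only [hq]
      rw [Finset.sum_fiberwise_of_maps_to (fun γ hγ => Finset.mem_image_of_mem _ hγ) p]
      exact hpsum
    have hqval : ∀ α, q α = ((S.filter (fun γ => γ i = α)).card : ℝ) * ((m:ℝ))⁻¹ := by
      intro α
      have hsub : S.filter (fun γ => γ i = α) ⊆ Γ.filter (fun γ => γ i = α) :=
        Finset.filter_subset_filter _ hSsub
      have e1 : ∑ γ ∈ Γ.filter (fun γ => γ i = α), p γ
          = ∑ γ ∈ S.filter (fun γ => γ i = α), p γ := by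
        refine (Finset.sum_subset hsub ?_).symm
        intro γ hγ hγ'
        have hns : γ ∉ S := fun hS =>
          hγ' (Finset.mem_filter.mpr ⟨hS, (Finset.mem_filter.mp hγ).2⟩)
        simp [hp, hns]
      have e2 : ∑ γ ∈ S.filter (fun γ => γ i = α), p γ
          = ((S.filter (fun γ => γ i = α)).card : ℝ) * ((m:ℝ))⁻¹ := by
        have hval : ∀ γ ∈ S.filter (fun γ => γ i = α), p γ = ((m:ℝ))⁻¹ := by
          intro γ hγ
          simp [hp, (Finset.mem_filter.mp hγ).1]
        rw [Finset.sum_congr rfl hval, Finset.sum_const, nsmul_eq_mul]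
      simp only [hq]
      rw [e1, e2]
    -- choose the anchor value
    obtain ⟨γ₁, hγ₁⟩ := hSne
    have hα₀I : γ₁ i ∈ Γ.image (fun γ => γ i) :=
      Finset.mem_image_of_mem _ (hSsub hγ₁)
    set s := (S.filter (fun γ => γ i = γ₁ i)).card with hs
    have hs1 : 1 ≤ s := by
      rw [hs]
      refine Finset.card_pos.mpr ⟨γ₁, Finset.mem_filter.mpr ⟨hγ₁, rfl⟩⟩
    have hs2 : s < m := by
      obtain ⟨b, hbmem, hbne⟩ := Finset.exists_mem_ne (hPS i) (γ₁ i)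
      obtain ⟨γ₂, hγ₂S, hγ₂b⟩ := Finset.mem_image.mp hbmem
      refine Finset.card_lt_card (Finset.filter_ssubset.mpr ⟨γ₂, hγ₂S, ?_⟩)
      rw [hγ₂b]; exact hbne
    have hq₀ : q (γ₁ i) = (s : ℝ) * ((m:ℝ))⁻¹ := hqval (γ₁ i)
    have hkm : (k : ℝ)⁻¹ ≤ (m : ℝ)⁻¹ := by
      apply inv_anti₀ hmpos
      exact_mod_cast hmk
    have hlow : ((k:ℝ))⁻¹ ≤ q (γ₁ i) := by
      rw [hq₀]
      have h1 : ((m:ℝ))⁻¹ ≤ (s:ℝ) * ((m:ℝ))⁻¹ := by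
        apply le_mul_of_one_le_left (by positivity)
        exact_mod_cast hs1
      linarith
    have hupp : q (γ₁ i) ≤ 1 - ((k:ℝ))⁻¹ := by
      rw [hq₀]
      have hsm : (s:ℝ) ≤ (m:ℝ) - 1 := by
        have : (s:ℝ) + 1 ≤ (m:ℝ) := by exact_mod_cast hs2
        linarith
      have h1 : (s:ℝ) * ((m:ℝ))⁻¹ ≤ ((m:ℝ) - 1) * ((m:ℝ))⁻¹ :=
        mul_le_mul_of_nonneg_right hsm (by positivity)
      have h2 : ((m:ℝ) - 1) * ((m:ℝ))⁻¹ = 1 - ((m:ℝ))⁻¹ := by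
        field_simp
      linarith
    -- assemble
    have hrest : ∑ α ∈ (Γ.image (fun γ => γ i)).erase (γ₁ i), q α = 1 - q (γ₁ i) := by
      have := Finset.add_sum_erase (Γ.image (fun γ => γ i)) q hα₀I
      linarith
    have hge : Real.negMulLog (1 - q (γ₁ i))
        ≤ ∑ α ∈ (Γ.image (fun γ => γ i)).erase (γ₁ i), Real.negMulLog (q α) := by
      rw [← hrest]
      exact negMulLog_sum_le _ _ fun α _ => hq0 α
    have hmarg : margEnt Γ p i = ∑ α ∈ Γ.image (fun γ => γ i), Real.negMulLog (q α) :=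
      margEnt_eq Γ p i
    calc xi k = Real.binEntropy ((k:ℝ))⁻¹ := xi_eq_binEntropy hk
      _ ≤ Real.binEntropy (q (γ₁ i)) := binEntropy_anchor hk hlow hupp
      _ = Real.negMulLog (q (γ₁ i)) + Real.negMulLog (1 - q (γ₁ i)) :=
          Real.binEntropy_eq_negMulLog_add_negMulLog_one_sub _
      _ ≤ Real.negMulLog (q (γ₁ i))
            + ∑ α ∈ (Γ.image (fun γ => γ i)).erase (γ₁ i), Real.negMulLog (q α) := by
          linarith
      _ = ∑ α ∈ Γ.image (fun γ => γ i), Real.negMulLog (q α) :=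
          Finset.add_sum_erase _ (fun α => Real.negMulLog (q α)) hα₀I
      _ = margEnt Γ p i := hmarg.symm
  -- conclude via the supremum
  have hbdd : BddAbove {e : ℝ | ∃ p : (Fin k → ℤ) → ℝ, (∀ γ, 0 ≤ p γ) ∧
      (∀ γ, p γ ≠ 0 → γ ∈ Γ) ∧ (∑ γ ∈ Γ, p γ) = 1 ∧ e = ⨅ i, margEnt Γ p i} := by
    refine ⟨(Γ.card : ℝ), ?_⟩
    rintro e ⟨p', hp'0, hp'supp, hp'sum, rfl⟩
    refine le_trans (ciInf_le (Set.Finite.bddBelow (Set.finite_range _)) ⟨0, by omega⟩) ?_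
    exact margEnt_le_card Γ p' hp'0 _
  have hmem : (⨅ i, margEnt Γ p i) ∈ {e : ℝ | ∃ p : (Fin k → ℤ) → ℝ, (∀ γ, 0 ≤ p γ) ∧
      (∀ γ, p γ ≠ 0 → γ ∈ Γ) ∧ (∑ γ ∈ Γ, p γ) = 1 ∧ e = ⨅ i, margEnt Γ p i} :=
    ⟨p, hp0, hpsupp, hpsum, rfl⟩
  exact le_trans (le_ciInf hmain) (le_csSup hbdd hmem)


end SlicePaper
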